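/- Let (X_i)_{1≤i≤n} be martingale differences with E[e^{|X_i|} | F_{i−1}] ≤ K a.s. for some K > 0. Set M_n = X_1 + ... + X_n. Then for all x > 0, P(M_n/n > x) ≤ exp(−n x²/(4K)) if x ∈ (0, 2K], and P(M_n/n > x) ≤ exp(−n(x − K)) if x > 2K. -/

import Mathlib

set_option maxHeartbeats 1000000
open MeasureTheory Real
open scoped Nat
open scoped Nat

lemma aux_exp_series (y : ℝ) : Real.exp y = ∑' k : ℕ, y ^ k / (k ! : ℝ) := by
  rw [Real.exp_eq_exp_ℝ, NormedSpace.exp_eq_tsum_div]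

lemma aux_exp_ineq (t : ℝ) {l : ℝ} (h0 : 0 ≤ l) (h1 : l ≤ 1) :
    Real.exp (l * t) ≤ 1 + l * t + l ^ 2 * Real.exp |t| := by
  have hs1 : Summable (fun k : ℕ => (l * t) ^ k / (k ! : ℝ)) := Real.summable_pow_div_factorial _
  have hs2 : Summable (fun k : ℕ => |t| ^ k / (k ! : ℝ)) := Real.summable_pow_div_factorial _
  have hs1' : Summable (fun k : ℕ => (l * t) ^ (k + 2) / ((k + 2)! : ℝ)) :=
    (summable_nat_add_iff 2).2 hs1
  have hs2' : Summable (fun k : ℕ => |t| ^ (k + 2) / ((k + 2)! : ℝ)) :=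
    (summable_nat_add_iff 2).2 hs2
  have hsplit : Real.exp (l * t) = 1 + l * t + ∑' k : ℕ, (l * t) ^ (k + 2) / ((k + 2)! : ℝ) := by
    rw [aux_exp_series]
    rw [← Summable.sum_add_tsum_nat_add 2 hs1]
    norm_num [Finset.sum_range_succ]
  have hsplit2 : Real.exp |t| = 1 + |t| + ∑' k : ℕ, |t| ^ (k + 2) / ((k + 2)! : ℝ) := by
    rw [aux_exp_series]
    rw [← Summable.sum_add_tsum_nat_add 2 hs2]
    norm_num [Finset.sum_range_succ]
  have hterm : ∀ k : ℕ, (l * t) ^ (k + 2) / ((k + 2)! : ℝ) ≤ l ^ 2 * (|t| ^ (k + 2) / ((k + 2)! : ℝ)) := by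
    intro k
    rw [mul_div_assoc']
    have hfac : (0:ℝ) < ((k + 2)! : ℝ) := by positivity
    apply div_le_div_of_nonneg_right _ hfac.le |>.trans_eq rfl
    calc (l * t) ^ (k + 2) ≤ |(l * t) ^ (k + 2)| := le_abs_self _
      _ = l ^ (k + 2) * |t| ^ (k + 2) := by
          rw [abs_pow, abs_mul, abs_of_nonneg h0, mul_pow]
      _ ≤ l ^ 2 * |t| ^ (k + 2) := by
          apply mul_le_mul_of_nonneg_right _ (by positivity)
          exact pow_le_pow_of_le_one h0 h1 (by omega)
  have : ∑' k : ℕ, (l * t) ^ (k + 2) / ((k + 2)! : ℝ) ≤ l ^ 2 * ∑' k : ℕ, |t| ^ (k + 2) / ((k + 2)! : ℝ) := by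
    rw [← tsum_mul_left]
    exact Summable.tsum_le_tsum hterm hs1' (hs2'.mul_left _)
  have htail : ∑' k : ℕ, |t| ^ (k + 2) / ((k + 2)! : ℝ) ≤ Real.exp |t| := by
    rw [hsplit2]
    nlinarith [abs_nonneg t]
  rw [hsplit]
  have hl2 : (0:ℝ) ≤ l ^ 2 := by positivity
  nlinarith [this, htail]

lemma aux_mul_int {Ω : Type*} {m0 : MeasurableSpace Ω} {μ : Measure Ω} [IsProbabilityMeasure μ]
    {m : MeasurableSpace Ω} (hm : m ≤ m0) {h g : Ω → ℝ} {C : ℝ} (hC : 0 ≤ C)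
    (hh_meas : StronglyMeasurable[m] h) (hh_int : Integrable h μ) (hh_nn : ∀ ω, 0 ≤ h ω)
    (hg_int : Integrable g μ) (hg_nn : ∀ ω, 0 ≤ g ω)
    (hcond : ∀ᵐ ω ∂μ, (μ[g | m]) ω ≤ C) :
    Integrable (fun ω => h ω * g ω) μ ∧ ∫ ω, h ω * g ω ∂μ ≤ C * ∫ ω, h ω ∂μ := by
  set B := C * ∫ ω, h ω ∂μ with hB
  have hinth_nn : 0 ≤ ∫ ω, h ω ∂μ := integral_nonneg hh_nn
  have hBnn : 0 ≤ B := mul_nonneg hC hinth_nn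
  -- truncations
  set hN : ℕ → Ω → ℝ := fun N ω => min (h ω) N with hhN
  have hN_meas : ∀ N, StronglyMeasurable[m] (hN N) := fun N => hh_meas.inf stronglyMeasurable_const
  have hN_nn : ∀ N ω, 0 ≤ hN N ω := fun N ω => le_min (hh_nn ω) (Nat.cast_nonneg N)
  have hN_bdd : ∀ N : ℕ, ∀ᵐ ω ∂μ, ‖hN N ω‖ ≤ (N : ℝ) := by
    intro N
    refine Filter.Eventually.of_forall fun ω => ?_
    rw [Real.norm_eq_abs, abs_of_nonneg (hN_nn N ω)]
    exact min_le_right _ _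
  have hN_int : ∀ N, Integrable (fun ω => hN N ω * g ω) μ :=
    fun N => hg_int.bdd_mul ((hN_meas N).mono hm).aestronglyMeasurable (hN_bdd N)
  -- key bound for truncations
  have key : ∀ N : ℕ, ∫ ω, hN N ω * g ω ∂μ ≤ B := by
    intro N
    have h1 : ∫ ω, hN N ω * g ω ∂μ = ∫ ω, (μ[(fun ω => hN N ω * g ω) | m]) ω ∂μ :=
      (integral_condExp hm).symm
    have h2 : μ[(fun ω => hN N ω * g ω) | m] =ᵐ[μ] fun ω => hN N ω * (μ[g | m]) ω :=
      condExp_stronglyMeasurable_mul_of_bound hm (hN_meas N) hg_int N (hN_bdd N)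
    rw [h1, integral_congr_ae h2]
    have hint1 : Integrable (fun ω => hN N ω * (μ[g | m]) ω) μ :=
      integrable_condExp.bdd_mul ((hN_meas N).mono hm).aestronglyMeasurable (hN_bdd N)
    have hint2 : Integrable (fun ω => C * hN N ω) μ :=
      ((hh_int.inf (integrable_const _))).const_mul C
    calc ∫ ω, hN N ω * (μ[g | m]) ω ∂μ ≤ ∫ ω, C * hN N ω ∂μ := by
          refine integral_mono_ae hint1 hint2 ?_
          filter_upwards [hcond] with ω hω
          rw [mul_comm C]
          exact mul_le_mul_of_nonneg_left hω (hN_nn N ω)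
      _ = C * ∫ ω, hN N ω ∂μ := by rw [integral_const_mul]
      _ ≤ B := by
          refine mul_le_mul_of_nonneg_left ?_ hC
          exact integral_mono (hh_int.inf (integrable_const _)) hh_int
            (fun ω => min_le_left _ _)
  -- monotone convergence
  have hmono : ∀ ω, Monotone fun N : ℕ => ENNReal.ofReal (hN N ω * g ω) := by
    intro ω N M hNM
    exact ENNReal.ofReal_le_ofReal (mul_le_mul_of_nonneg_right
      (min_le_min le_rfl (Nat.cast_le.2 hNM)) (hg_nn ω))
  have hsup : ∀ ω, (⨆ N : ℕ, ENNReal.ofReal (hN N ω * g ω)) = ENNReal.ofReal (h ω * g ω) := by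
    intro ω
    have htend : Filter.Tendsto (fun N : ℕ => ENNReal.ofReal (hN N ω * g ω)) Filter.atTop
        (nhds (ENNReal.ofReal (h ω * g ω))) := by
      have : ∀ᶠ N : ℕ in Filter.atTop, ENNReal.ofReal (hN N ω * g ω)
          = ENNReal.ofReal (h ω * g ω) := by
        filter_upwards [Filter.eventually_ge_atTop ⌈h ω⌉₊] with N hNc
        congr 2
        simp only [hhN]
        rw [min_eq_left]
        exact (Nat.le_ceil (h ω)).trans (Nat.cast_le.2 hNc)
      exact Filter.Tendsto.congr' (this.mono fun N hN => hN.symm) tendsto_const_nhds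
    exact tendsto_nhds_unique (tendsto_atTop_iSup (hmono ω)) htend
  have hnn_hg : ∀ᵐ ω ∂μ, 0 ≤ h ω * g ω :=
    Filter.Eventually.of_forall fun ω => mul_nonneg (hh_nn ω) (hg_nn ω)
  have hmeas_hg : AEStronglyMeasurable[m0] (fun ω => h ω * g ω) μ :=
    ((hh_meas.mono hm).aestronglyMeasurable).mul hg_int.1
  have hlint : ∫⁻ ω, ENNReal.ofReal (h ω * g ω) ∂μ ≤ ENNReal.ofReal B := by
    calc ∫⁻ ω, ENNReal.ofReal (h ω * g ω) ∂μ
        = ∫⁻ ω, ⨆ N : ℕ, ENNReal.ofReal (hN N ω * g ω) ∂μ :=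
          lintegral_congr fun ω => (hsup ω).symm
      _ = ⨆ N, ∫⁻ ω, ENNReal.ofReal (hN N ω * g ω) ∂μ :=
          lintegral_iSup' (fun N => (hN_int N).aestronglyMeasurable.aemeasurable.ennreal_ofReal)
            (Filter.Eventually.of_forall hmono)
      _ ≤ ENNReal.ofReal B := by
          refine iSup_le fun N => ?_
          rw [← ofReal_integral_eq_lintegral_ofReal (hN_int N)
            (Filter.Eventually.of_forall fun ω => mul_nonneg (hN_nn N ω) (hg_nn ω))]
          exact ENNReal.ofReal_le_ofReal (key N)
  have hfin : HasFiniteIntegral (fun ω => h ω * g ω) μ := by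
    rw [hasFiniteIntegral_iff_ofReal hnn_hg]
    exact lt_of_le_of_lt hlint ENNReal.ofReal_lt_top
  have hint_hg : Integrable (fun ω => h ω * g ω) μ := ⟨hmeas_hg, hfin⟩
  refine ⟨hint_hg, ?_⟩
  have heq := ofReal_integral_eq_lintegral_ofReal hint_hg hnn_hg
  refine (ENNReal.ofReal_le_ofReal_iff hBnn).1 ?_
  rw [heq]
  exact hlint

lemma aux_mgf {Ω : Type*} {m0 : MeasurableSpace Ω} (μ : Measure Ω) [IsProbabilityMeasure μ]
    (n : ℕ) (ℱ : MeasureTheory.Filtration ℕ m0)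
    (X : ℕ → Ω → ℝ) (K : ℝ) (hK : 0 < K) {l : ℝ} (hl0 : 0 ≤ l) (hl1 : l ≤ 1)
    (hadapted : ∀ i ∈ Finset.Icc 1 n, StronglyMeasurable[ℱ i] (X i))
    (hint : ∀ i ∈ Finset.Icc 1 n, Integrable (X i) μ)
    (hmd : ∀ i ∈ Finset.Icc 1 n, μ[X i | ℱ (i - 1)] =ᵐ[μ] 0)
    (hexpint : ∀ i ∈ Finset.Icc 1 n, Integrable (fun ω => Real.exp |X i ω|) μ)
    (hcond : ∀ i ∈ Finset.Icc 1 n,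
      ∀ᵐ ω ∂μ, (μ[fun ω' => Real.exp |X i ω'| | ℱ (i - 1)]) ω ≤ K) :
    ∀ k, k ≤ n →
      Integrable (fun ω => Real.exp (l * ∑ i ∈ Finset.Icc 1 k, X i ω)) μ ∧
      StronglyMeasurable[ℱ k] (fun ω => Real.exp (l * ∑ i ∈ Finset.Icc 1 k, X i ω)) ∧
      ∫ ω, Real.exp (l * ∑ i ∈ Finset.Icc 1 k, X i ω) ∂μ ≤ (1 + l ^ 2 * K) ^ k := by
  intro k
  induction k with
  | zero =>
      intro _
      simp only [Finset.Icc_eq_empty_of_lt (by norm_num : (1:ℕ) > 0), Finset.sum_empty,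
        mul_zero, Real.exp_zero, pow_zero]
      exact ⟨integrable_const 1, stronglyMeasurable_const, by simp⟩
  | succ k ih =>
      intro hk1
      have hkn : k ≤ n := le_trans (Nat.le_succ k) hk1
      obtain ⟨ih_int, ih_meas, ih_bound⟩ := ih hkn
      have hmem : k + 1 ∈ Finset.Icc 1 n := Finset.mem_Icc.2 ⟨Nat.le_add_left 1 k, hk1⟩
      set C : ℝ := 1 + l ^ 2 * K with hC
      have hCnn : 0 ≤ C := by positivity
      -- split the sum
      have hins : Finset.Icc 1 (k + 1) = insert (k + 1) (Finset.Icc 1 k) := by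
        ext i; simp only [Finset.mem_Icc, Finset.mem_insert]; omega
      have hsplit : ∀ ω, Real.exp (l * ∑ i ∈ Finset.Icc 1 (k+1), X i ω)
          = Real.exp (l * ∑ i ∈ Finset.Icc 1 k, X i ω) * Real.exp (l * X (k+1) ω) := by
        intro ω
        rw [hins, Finset.sum_insert (by simp), ← Real.exp_add]
        ring_nf
      -- the new factor g
      set g : Ω → ℝ := fun ω => Real.exp (l * X (k+1) ω) with hg
      have hX_m0 : StronglyMeasurable (X (k+1)) := (hadapted _ hmem).mono (ℱ.le _)
      have hg_meas : StronglyMeasurable g :=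
        Real.continuous_exp.comp_stronglyMeasurable (stronglyMeasurable_const.mul hX_m0)
      have hg_nn : ∀ ω, 0 ≤ g ω := fun ω => (Real.exp_pos _).le
      have hg_le : ∀ ω, g ω ≤ Real.exp |X (k+1) ω| := by
        intro ω
        apply Real.exp_le_exp.2
        calc l * X (k+1) ω ≤ |l * X (k+1) ω| := le_abs_self _
          _ = l * |X (k+1) ω| := by rw [abs_mul, abs_of_nonneg hl0]
          _ ≤ 1 * |X (k+1) ω| := mul_le_mul_of_nonneg_right hl1 (abs_nonneg _)
          _ = |X (k+1) ω| := one_mul _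
      have hg_int : Integrable g μ := by
        refine (hexpint _ hmem).mono hg_meas.aestronglyMeasurable ?_
        refine Filter.Eventually.of_forall fun ω => ?_
        rw [Real.norm_eq_abs, Real.norm_eq_abs, abs_of_nonneg (hg_nn ω),
          abs_of_nonneg (Real.exp_pos _).le]
        exact hg_le ω
      -- conditional expectation bound on g
      have hmd' : μ[X (k+1) | ℱ k] =ᵐ[μ] 0 := by
        have := hmd _ hmem
        simpa using this
      have hcond' : ∀ᵐ ω ∂μ, (μ[fun ω' => Real.exp |X (k+1) ω'| | ℱ k]) ω ≤ K := by
        have := hcond _ hmem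
        simpa using this
      set ph : Ω → ℝ := fun ω => 1 + l * X (k+1) ω + l ^ 2 * Real.exp |X (k+1) ω| with hph
      have hpheq : ph = (fun _ => (1:ℝ)) + (l • X (k+1))
          + (l ^ 2 • fun ω => Real.exp |X (k+1) ω|) := by
        funext ω; simp [hph, smul_eq_mul]
      have hphint : Integrable ph μ := by
        rw [hpheq]
        exact ((integrable_const 1).add ((hint _ hmem).smul l)).add ((hexpint _ hmem).smul (l^2))
      have hgcond : ∀ᵐ ω ∂μ, (μ[g | ℱ k]) ω ≤ C := by
        have hmono := condExp_mono (m := ℱ k) hg_int hphint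
          (Filter.Eventually.of_forall fun ω => aux_exp_ineq (X (k+1) ω) hl0 hl1)
        have hphc : μ[ph | ℱ k] =ᵐ[μ] (fun _ => (1:ℝ)) + l • μ[X (k+1) | ℱ k]
            + l ^ 2 • μ[fun ω' => Real.exp |X (k+1) ω'| | ℱ k] := by
          rw [hpheq]
          refine (condExp_add ((integrable_const 1).add ((hint _ hmem).smul l))
            ((hexpint _ hmem).smul (l^2)) _).trans ?_
          refine Filter.EventuallyEq.add ?_ (condExp_smul (l^2) _ _)
          refine (condExp_add (integrable_const 1) ((hint _ hmem).smul l) _).trans ?_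
          refine Filter.EventuallyEq.add ?_ (condExp_smul l _ _)
          rw [condExp_const (ℱ.le k)]
        filter_upwards [hmono, hphc, hmd', hcond'] with ω h1 h2 h3 h4
        have : (μ[ph | ℱ k]) ω = 1 + l * (0:ℝ) + l ^ 2 * (μ[fun ω' => Real.exp |X (k+1) ω'| | ℱ k]) ω := by
          rw [h2]
          simp [h3, smul_eq_mul]
        refine le_trans h1 ?_
        rw [this]
        have := mul_le_mul_of_nonneg_left h4 (by positivity : (0:ℝ) ≤ l ^ 2)
        simp only [hC]
        nlinarith
      -- apply the product lemma
      have hmain := aux_mul_int (ℱ.le k) hCnn ih_meas ih_int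
        (fun ω => (Real.exp_pos _).le) hg_int hg_nn hgcond
      have hfun : (fun ω => Real.exp (l * ∑ i ∈ Finset.Icc 1 (k+1), X i ω))
          = fun ω => Real.exp (l * ∑ i ∈ Finset.Icc 1 k, X i ω) * g ω := by
        funext ω; exact hsplit ω
      refine ⟨by rw [hfun]; exact hmain.1, ?_, ?_⟩
      · have : StronglyMeasurable[ℱ (k+1)] (fun ω => ∑ i ∈ Finset.Icc 1 (k+1), X i ω) := by
          refine Finset.stronglyMeasurable_fun_sum _ fun i hi => ?_
          have hi' := Finset.mem_Icc.1 hi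
          exact (hadapted i (Finset.mem_Icc.2 ⟨hi'.1, le_trans hi'.2 hk1⟩)).mono
            (ℱ.mono hi'.2)
        exact Real.continuous_exp.comp_stronglyMeasurable (stronglyMeasurable_const.mul this)
      · rw [hfun]
        calc ∫ ω, Real.exp (l * ∑ i ∈ Finset.Icc 1 k, X i ω) * g ω ∂μ
            ≤ C * ∫ ω, Real.exp (l * ∑ i ∈ Finset.Icc 1 k, X i ω) ∂μ := hmain.2
          _ ≤ C * C ^ k := mul_le_mul_of_nonneg_left ih_bound hCnn
          _ = C ^ (k+1) := (pow_succ' C k).symm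

theorem stmt_4 {Ω : Type*} {m0 : MeasurableSpace Ω} (μ : Measure Ω) [IsProbabilityMeasure μ]
    (n : ℕ) (ℱ : MeasureTheory.Filtration ℕ m0) (hF0 : ℱ 0 = ⊥)
    (X : ℕ → Ω → ℝ) (K : ℝ) (hK : 0 < K)
    (hadapted : ∀ i ∈ Finset.Icc 1 n, StronglyMeasurable[ℱ i] (X i))
    (hint : ∀ i ∈ Finset.Icc 1 n, Integrable (X i) μ)
    (hmd : ∀ i ∈ Finset.Icc 1 n, μ[X i | ℱ (i - 1)] =ᵐ[μ] 0)
    (hexpint : ∀ i ∈ Finset.Icc 1 n, Integrable (fun ω => Real.exp |X i ω|) μ)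
    (hcond : ∀ i ∈ Finset.Icc 1 n,
      ∀ᵐ ω ∂μ, (μ[fun ω' => Real.exp |X i ω'| | ℱ (i - 1)]) ω ≤ K) :
    ∀ x : ℝ, 0 < x →
      (x ≤ 2 * K →
        (μ {ω | (∑ i ∈ Finset.Icc 1 n, X i ω) / n > x}).toReal
          ≤ Real.exp (-(n * x ^ 2 / (4 * K)))) ∧
      (2 * K < x →
        (μ {ω | (∑ i ∈ Finset.Icc 1 n, X i ω) / n > x}).toReal
          ≤ Real.exp (-(n * (x - K)))) := by
  intro x hx
  by_cases hn : n = 0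
  · subst hn
    have hset : {ω : Ω | (∑ i ∈ Finset.Icc 1 0, X i ω) / ((0:ℕ):ℝ) > x} = ∅ := by
      ext ω
      simp only [Set.mem_setOf_eq, Set.mem_empty_iff_false, iff_false, not_lt, gt_iff_lt]
      rw [Nat.cast_zero, div_zero]
      exact hx.le
    constructor <;> intro _ <;> simp only [hset, measure_empty, ENNReal.toReal_zero] <;>
      positivity
  · have hnpos : (0:ℝ) < n := by
      exact_mod_cast Nat.pos_of_ne_zero hn
    have main : ∀ l : ℝ, 0 < l → l ≤ 1 →
        (μ {ω | (∑ i ∈ Finset.Icc 1 n, X i ω) / n > x}).toReal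
          ≤ Real.exp (n * (l ^ 2 * K) - l * (n * x)) := by
      intro l hl0 hl1
      obtain ⟨hIint, -, hIbound⟩ := aux_mgf μ n ℱ X K hK hl0.le hl1 hadapted hint hmd
        hexpint hcond n le_rfl
      set f : Ω → ℝ := fun ω => Real.exp (l * ∑ i ∈ Finset.Icc 1 n, X i ω) with hf
      set ε : ℝ := Real.exp (l * (n * x)) with hε
      have hεpos : 0 < ε := Real.exp_pos _
      have hsub : {ω | (∑ i ∈ Finset.Icc 1 n, X i ω) / n > x} ⊆ {ω | ε ≤ f ω} := by
        intro ω hω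
        simp only [Set.mem_setOf_eq, gt_iff_lt] at hω ⊢
        rw [lt_div_iff₀ hnpos] at hω
        exact Real.exp_le_exp.2 (by nlinarith)
      have hmarkov := mul_meas_ge_le_integral_of_nonneg
        (Filter.Eventually.of_forall fun ω => (Real.exp_pos _).le) hIint ε
      have h1 : (μ {ω | (∑ i ∈ Finset.Icc 1 n, X i ω) / n > x}).toReal
          ≤ (μ {ω | ε ≤ f ω}).toReal :=
        ENNReal.toReal_mono (measure_ne_top μ _) (measure_mono hsub)
      have h3 : ∫ ω, f ω ∂μ ≤ Real.exp (n * (l ^ 2 * K)) := by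
        refine hIbound.trans ?_
        calc (1 + l ^ 2 * K) ^ n ≤ (Real.exp (l ^ 2 * K)) ^ n := by
              refine pow_le_pow_left₀ (by positivity) ?_ n
              linarith [Real.add_one_le_exp (l ^ 2 * K)]
          _ = Real.exp (n * (l ^ 2 * K)) := by
              rw [← Real.exp_nat_mul]
      have h2 : (μ {ω | ε ≤ f ω}).toReal ≤ Real.exp (n * (l ^ 2 * K)) / ε := by
        rw [le_div_iff₀ hεpos]
        calc (μ {ω | ε ≤ f ω}).toReal * ε = ε * (μ {ω | ε ≤ f ω}).toReal := mul_comm _ _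
          _ ≤ ∫ ω, f ω ∂μ := hmarkov
          _ ≤ Real.exp (n * (l ^ 2 * K)) := h3
      refine (h1.trans h2).trans (le_of_eq ?_)
      rw [hε, ← Real.exp_sub]
    constructor
    · intro hx2K
      have hl0 : 0 < x / (2 * K) := by positivity
      have hl1 : x / (2 * K) ≤ 1 := by
        rw [div_le_one (by positivity)]; exact hx2K
      refine (main _ hl0 hl1).trans (le_of_eq ?_)
      congr 1
      field_simp
      ring
    · intro h2K
      refine (main 1 one_pos le_rfl).trans (le_of_eq ?_)
      congr 1
      ring
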